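/- arXiv:1608.07728 — 2 statements merged into one kernel-verified Lean document; each statement's English description precedes it below -/
import Mathlib

section
/- Let ρ_{AE} = (1/N)(|0⟩⟨0|_A ⊗ |g⁰⟩⟨g⁰| + |1⟩⟨1|_A ⊗ |g¹⟩⟨g¹|) be a density operator with N⁰ = ⟨g⁰|g⁰⟩ > 0, N¹ = ⟨g¹|g¹⟩ > 0, N = N⁰+N¹. Then the conditional von Neumann entropy satisfies S(A|E)_ρ ≥ h(N⁰/(N⁰+N¹)) − h(λ), where λ = 1/2 + √((N⁰−N¹)² + 4(Re⟨g⁰|g¹⟩)²)/(2(N⁰+N¹)). -/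
open scoped ComplexInnerProductSpace

/-- Von Neumann entropy (base-2) of a Hermitian matrix, via its eigenvalues. -/
noncomputable def vonNeumannEntropy {n : Type*} [Fintype n] [DecidableEq n]
    {ρ : Matrix n n ℂ} (hρ : ρ.IsHermitian) : ℝ :=
  -∑ i, hρ.eigenvalues i * Real.logb 2 (hρ.eigenvalues i)

/-- Binary Shannon entropy (base 2). -/
noncomputable def binEnt (x : ℝ) : ℝ :=
  -(x * Real.logb 2 x) - (1 - x) * Real.logb 2 (1 - x)

open Matrix

lemma vecMulVec_mul_vecMulVec {n : Type*} [Fintype n] (x y z w : n → ℂ) :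
    vecMulVec x y * vecMulVec z w = (y ⬝ᵥ z) • vecMulVec x w := by
  ext i j
  simp only [mul_apply, vecMulVec_apply, Matrix.smul_apply, dotProduct, smul_eq_mul, Finset.sum_mul]
  exact Finset.sum_congr rfl fun k _ => by ring

lemma trace_vecMulVec {n : Type*} [Fintype n] (x y : n → ℂ) :
    (vecMulVec x y).trace = y ⬝ᵥ x := by
  simp only [trace, diag, vecMulVec_apply, dotProduct]
  exact Finset.sum_congr rfl fun k _ => by ring

/-- The unnormalized two-vector operator satisfies a cubic identity. -/
lemma cubic_general {n : Type*} [Fintype n] (x y : n → ℂ) (a b c c' : ℂ)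
    (ha : star x ⬝ᵥ x = a) (hb : star y ⬝ᵥ y = b)
    (hc : star x ⬝ᵥ y = c) (hc' : star y ⬝ᵥ x = c') :
    (vecMulVec x (star x) + vecMulVec y (star y)) * (vecMulVec x (star x) + vecMulVec y (star y))
      * (vecMulVec x (star x) + vecMulVec y (star y))
    = (a + b) • ((vecMulVec x (star x) + vecMulVec y (star y))
        * (vecMulVec x (star x) + vecMulVec y (star y)))
      - (a * b - c * c') • (vecMulVec x (star x) + vecMulVec y (star y)) := by
  simp only [add_mul, mul_add, _root_.vecMulVec_mul_vecMulVec, smul_mul_assoc, mul_smul_comm,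
    _root_.vecMulVec_mul_vecMulVec, ha, hb, hc, hc', smul_smul]
  module

/-- Eigenvalues of a Hermitian matrix satisfying a cubic matrix identity satisfy the
corresponding scalar cubic. -/
lemma eigen_cubic {n : Type*} [Fintype n] [DecidableEq n]
    {A : Matrix n n ℂ} (hA : A.IsHermitian) (s t : ℝ)
    (h : A * A * A = (s : ℂ) • (A * A) + (t : ℂ) • A) (i : n) :
    hA.eigenvalues i ^ 3 = s * hA.eigenvalues i ^ 2 + t * hA.eigenvalues i := by
  set U : Matrix n n ℂ := (hA.eigenvectorUnitary : Matrix n n ℂ) with hUdef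
  have hU2 : U * star U = 1 := Unitary.coe_mul_star_self _
  have cancel : ∀ X : Matrix n n ℂ, U * (star U * X) = X := fun X => by
    rw [← mul_assoc, hU2, one_mul]
  have key : ∀ B C : Matrix n n ℂ,
      (star U * B * U) * (star U * C * U) = star U * (B * C) * U := by
    intro B C
    simp only [mul_assoc, cancel]
  have hdiag : star U * A * U = diagonal (fun j => ((hA.eigenvalues j : ℝ) : ℂ)) :=
    by have := hA.conjStarAlgAut_star_eigenvectorUnitary
       rw [Unitary.conjStarAlgAut_star_apply] at this; exact this
  set D : Matrix n n ℂ := diagonal (fun j => ((hA.eigenvalues j : ℝ) : ℂ)) with hD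
  have e2 : star U * (A * A) * U = D * D := by rw [← hdiag, key]
  have e3 : star U * (A * A * A) * U = D * (D * D) := by
    rw [← e2, ← hdiag, key, show A * (A * A) = A * A * A from (mul_assoc A A A).symm]
  have e4' : star U * ((s:ℂ) • (A * A) + (t:ℂ) • A) * U = (s:ℂ) • (D * D) + (t:ℂ) • D := by
    simp only [Matrix.mul_add, Matrix.add_mul, mul_smul_comm, smul_mul_assoc, e2, hdiag]
  have e4 : (s:ℂ) • (D * D) + (t:ℂ) • D = D * (D * D) := by rw [← e3, h, e4']
  have e5 := congrFun (congrFun e4 i) i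
  simp only [hD, diagonal_mul_diagonal, diagonal_apply_eq, Function.comp_apply, Matrix.add_apply,
    Matrix.smul_apply, smul_eq_mul, Pi.mul_apply] at e5
  have e5' : s * (hA.eigenvalues i * hA.eigenvalues i) + t * hA.eigenvalues i
      = hA.eigenvalues i * (hA.eigenvalues i * hA.eigenvalues i) := by exact_mod_cast e5
  linear_combination -e5'

lemma trace_eq_sum_eigen {n : Type*} [Fintype n] [DecidableEq n]
    {A : Matrix n n ℂ} (hA : A.IsHermitian) :
    A.trace = ((∑ i, hA.eigenvalues i : ℝ) : ℂ) := by
  conv_lhs => rw [hA.spectral_theorem, Unitary.conjStarAlgAut_apply]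
  rw [trace_mul_cycle]
  rw [Unitary.coe_star_mul_self, one_mul, trace_diagonal]
  push_cast
  simp [Function.comp]

lemma trace_sq_eq_sum_eigen_sq {n : Type*} [Fintype n] [DecidableEq n]
    {A : Matrix n n ℂ} (hA : A.IsHermitian) :
    (A * A).trace = ((∑ i, hA.eigenvalues i ^ 2 : ℝ) : ℂ) := by
  set U : Matrix n n ℂ := (hA.eigenvectorUnitary : Matrix n n ℂ) with hUdef
  set D : Matrix n n ℂ := diagonal (RCLike.ofReal ∘ hA.eigenvalues) with hD
  have hA2 : A * A = U * (D * D) * star U := by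
    conv_lhs => rw [hA.spectral_theorem, Unitary.conjStarAlgAut_apply]
    simp only [← hUdef, ← hD, mul_assoc]
    congr 1
    congr 1
    rw [← mul_assoc, ← mul_assoc, Unitary.coe_star_mul_self, one_mul]
  rw [hA2, trace_mul_cycle, ← mul_assoc, Unitary.coe_star_mul_self, one_mul, hD,
    diagonal_mul_diagonal, trace_diagonal]
  push_cast
  simp [sq, Function.comp]

/-- If each `lam i ∈ {0, p, q}` and the first two power sums match those of `{p, q}`,
then `∑ f (lam i) = f p + f q` for any `f` with `f 0 = 0`. -/
lemma sum_f_eigen {ι : Type*} [Fintype ι] (lam : ι → ℝ) (p q : ℝ)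
    (hp : 0 < p) (hq : 0 ≤ q) (hmem : ∀ i, lam i = 0 ∨ lam i = p ∨ lam i = q)
    (hsum : ∑ i, lam i = p + q) (hsq : ∑ i, (lam i)^2 = p^2 + q^2)
    (f : ℝ → ℝ) (hf0 : f 0 = 0) :
    ∑ i, f (lam i) = f p + f q := by
  rcases eq_or_lt_of_le hq with hq0 | hqpos
  · -- q = 0
    have hq0 : q = 0 := hq0.symm
    subst hq0
    have key : ∀ i, f (lam i) = (f p / p) * lam i := by
      intro i
      rcases hmem i with h | h | h <;> rw [h]
      · simp [hf0]
      · field_simp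
      · simp [hf0]
    rw [Finset.sum_congr rfl fun i _ => key i, ← Finset.mul_sum, hsum, hf0]
    field_simp
    ring
  rcases eq_or_ne p q with hpq | hpq
  · -- p = q
    subst hpq
    have key : ∀ i, f (lam i) = (f p / p) * lam i := by
      intro i
      rcases hmem i with h | h | h <;> rw [h]
      · simp [hf0]
      · field_simp
      · field_simp
    rw [Finset.sum_congr rfl fun i _ => key i, ← Finset.mul_sum, hsum]
    field_simp
  · -- p ≠ q, both positive
    set β : ℝ := (f p / p - f q / q) / (p - q) with hβ
    set α : ℝ := f p / p - β * p with hα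
    have hpne : p ≠ 0 := ne_of_gt hp
    have hqne : q ≠ 0 := ne_of_gt hqpos
    have hpqne : p - q ≠ 0 := sub_ne_zero.mpr hpq
    have fp : f p = α * p + β * p ^ 2 := by
      rw [hα]; field_simp; ring
    have fq : f q = α * q + β * q ^ 2 := by
      rw [hα, hβ]; field_simp; ring
    have key : ∀ i, f (lam i) = α * lam i + β * (lam i) ^ 2 := by
      intro i
      rcases hmem i with h | h | h <;> rw [h]
      · simp [hf0]
      · exact fp
      · exact fq
    rw [Finset.sum_congr rfl fun i _ => key i, Finset.sum_add_distrib, ← Finset.mul_sum,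
      ← Finset.mul_sum, hsum, hsq, fp, fq]
    ring

/-- `binEnt` equals `Real.binEntropy` divided by `log 2`. -/
lemma binEnt_eq (x : ℝ) : binEnt x = Real.binEntropy x / Real.log 2 := by
  unfold binEnt Real.binEntropy Real.logb
  rw [Real.log_inv, Real.log_inv]
  ring

lemma binEnt_anti {x y : ℝ} (hx : 1/2 ≤ x) (hxy : x ≤ y) (hy : y ≤ 1) :
    binEnt y ≤ binEnt x := by
  rw [binEnt_eq, binEnt_eq]
  have h2 : (0:ℝ) < Real.log 2 := Real.log_pos (by norm_num)
  have hx' : x ∈ Set.Icc (2⁻¹:ℝ) 1 := ⟨by linarith, by linarith⟩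
  have hy' : y ∈ Set.Icc (2⁻¹:ℝ) 1 := ⟨by linarith, hy⟩
  have hmono : Real.binEntropy y ≤ Real.binEntropy x := by
    rcases eq_or_lt_of_le hxy with rfl | h
    · exact le_refl _
    · exact (Real.binEntropy_strictAntiOn hx' hy' h).le
  gcongr

lemma binEnt_one_sub (x : ℝ) : binEnt (1 - x) = binEnt x := by
  unfold binEnt
  rw [show (1:ℝ) - (1 - x) = x by ring]
  ring

/-- Main workhorse: entropy of a normalized two-vector Gram operator. -/
lemma entropy_two_vector {n : Type*} [Fintype n] [DecidableEq n]
    (x y : n → ℂ) (N0 N1 N cc : ℝ) (c : ℂ)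
    (hx : star x ⬝ᵥ x = (N0:ℂ)) (hy : star y ⬝ᵥ y = (N1:ℂ))
    (hxy : star x ⬝ᵥ y = c) (hyx : star y ⬝ᵥ x = (starRingEnd ℂ) c)
    (hcc : Complex.normSq c = cc)
    (hN0pos : 0 < N0) (hN1pos : 0 < N1) (hN : N = N0 + N1)
    (hCS : cc ≤ N0 * N1)
    {A : Matrix n n ℂ} (hA : A.IsHermitian)
    (hAeq : A = (N:ℂ)⁻¹ • (vecMulVec x (star x) + vecMulVec y (star y))) :
    vonNeumannEntropy hA
      = binEnt (1/2 + Real.sqrt ((N0 - N1)^2 + 4 * cc) / (2*N)) := by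
  have hNpos : 0 < N := by rw [hN]; linarith
  have hNne : (N:ℂ) ≠ 0 := by exact_mod_cast hNpos.ne'
  have hNne' : N ≠ 0 := hNpos.ne'
  have hccnn : 0 ≤ cc := by rw [← hcc]; exact Complex.normSq_nonneg c
  set Δ : ℝ := (N0 - N1)^2 + 4*cc with hΔ
  have hΔnn : 0 ≤ Δ := by positivity
  set s : ℝ := Real.sqrt Δ with hs
  have hs2 : s^2 = Δ := Real.sq_sqrt hΔnn
  have hsnn : 0 ≤ s := Real.sqrt_nonneg Δ
  have hsleN : s ≤ N := by
    rw [hs, ← Real.sqrt_sq hNpos.le]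
    apply Real.sqrt_le_sqrt
    rw [hN]; nlinarith
  set μ : ℝ := 1/2 + s/(2*N) with hμ
  have hμhalf : 1/2 ≤ μ := by
    rw [hμ]; have : 0 ≤ s/(2*N) := by positivity
    linarith
  have hμ1 : μ ≤ 1 := by
    rw [hμ]
    have : s/(2*N) ≤ 1/2 := by
      rw [div_le_iff₀ (by linarith)]; linarith
    linarith
  set d : ℝ := (N0*N1 - cc)/N^2 with hd
  have hs2' : s^2 = (N0 - N1)^2 + 4*cc := by rw [hs2]
  have hμd : μ * (1 - μ) = d := by
    have e1 : μ * (1-μ) = 1/4 - s^2/(4*N^2) := by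
      rw [hμ]; field_simp; ring
    rw [e1, hs2', hd, hN]
    field_simp
    ring
  have hcub := cubic_general x y (N0:ℂ) (N1:ℂ) c ((starRingEnd ℂ) c) hx hy hxy hyx
  have hne2 : ((N0:ℂ) + (N1:ℂ)) ≠ 0 := by
    have h' : ((N0+N1:ℝ):ℂ) ≠ 0 := by rw [← hN]; exact hNne
    push_cast at h'; exact h'
  have hccC : c * (starRingEnd ℂ) c = ((cc:ℝ):ℂ) := by
    rw [← hcc]; exact Complex.mul_conj c
  have hccC' : (starRingEnd ℂ) c * c = ((cc:ℝ):ℂ) := by rw [mul_comm]; exact hccC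
  have hmat : A * A * A = ((1:ℝ):ℂ) • (A*A) + ((-d:ℝ):ℂ) • A := by
    rw [hAeq]
    simp only [smul_mul_assoc, mul_smul_comm, smul_smul]
    rw [hcub]
    simp only [smul_sub, smul_smul]
    match_scalars
    · push_cast [hN]
      field_simp
    all_goals
      rw [hccC, hd]
      push_cast [hN]
      field_simp
      try ring
      try tauto
  have heig := eigen_cubic hA 1 (-d) hmat
  have hmem : ∀ i, hA.eigenvalues i = 0 ∨ hA.eigenvalues i = μ ∨ hA.eigenvalues i = 1 - μ := by
    intro i
    have h3 := heig i
    have hfac : hA.eigenvalues i *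
        ((hA.eigenvalues i - μ) * (hA.eigenvalues i - (1-μ))) = 0 := by
      linear_combination h3 + hA.eigenvalues i * hμd
    rcases mul_eq_zero.mp hfac with h | h
    · exact Or.inl h
    rcases mul_eq_zero.mp h with h | h
    · exact Or.inr (Or.inl (sub_eq_zero.mp h))
    · exact Or.inr (Or.inr (sub_eq_zero.mp h))
  have htr : ∑ i, hA.eigenvalues i = μ + (1 - μ) := by
    have h1 : A.trace = ((1:ℝ):ℂ) := by
      rw [hAeq, trace_smul, trace_add, _root_.trace_vecMulVec, _root_.trace_vecMulVec, hx, hy]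
      rw [smul_eq_mul]
      push_cast [hN]
      have hne2 : ((N0:ℂ) + (N1:ℂ)) ≠ 0 := by
        have h' : ((N0+N1:ℝ):ℂ) ≠ 0 := by rw [← hN]; exact hNne
        push_cast at h'; exact h'
      field_simp
    have h2 := trace_eq_sum_eigen hA
    rw [h1] at h2
    have h3 : (1:ℝ) = ∑ i, hA.eigenvalues i := by exact_mod_cast h2
    rw [← h3]; ring
  have htr2 : ∑ i, hA.eigenvalues i ^ 2 = μ^2 + (1-μ)^2 := by
    have hA2 : A * A = ((N:ℂ)⁻¹ * (N:ℂ)⁻¹) •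
        ((N0:ℂ) • vecMulVec x (star x) + (N1:ℂ) • vecMulVec y (star y)
          + c • vecMulVec x (star y) + ((starRingEnd ℂ) c) • vecMulVec y (star x)) := by
      rw [hAeq]
      simp only [smul_mul_assoc, mul_smul_comm, smul_smul, add_mul, mul_add,
        _root_.vecMulVec_mul_vecMulVec, hx, hy, hxy, hyx]
      module
    have h1 : (A*A).trace = (((N0^2+N1^2+2*cc)/N^2 : ℝ) : ℂ) := by
      rw [hA2]
      simp only [trace_smul, trace_add, trace_smul, _root_.trace_vecMulVec, hx, hy, hxy, hyx,
        smul_eq_mul]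
      rw [hccC, hccC']
      push_cast [hN]
      field_simp
      ring
    have h2 := trace_sq_eq_sum_eigen_sq hA
    rw [h1] at h2
    have h3 : (N0^2+N1^2+2*cc)/N^2 = ∑ i, hA.eigenvalues i ^ 2 := by exact_mod_cast h2
    rw [← h3, show μ^2+(1-μ)^2 = 1 - 2*(μ*(1-μ)) from by ring, hμd, hd, hN]
    field_simp
    ring
  have hμpos : 0 < μ := lt_of_lt_of_le (by norm_num) hμhalf
  have hνnn : 0 ≤ 1 - μ := by linarith
  have hsum := sum_f_eigen hA.eigenvalues μ (1-μ) hμpos hνnn hmem htr htr2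
    (fun z => -(z * Real.logb 2 z)) (by simp)
  unfold vonNeumannEntropy binEnt
  rw [← Finset.sum_neg_distrib]
  rw [hsum]
  ring_nf

/-- for ρ_{AE} = (1/N)(|0⟩⟨0|⊗|g⁰⟩⟨g⁰| + |1⟩⟨1|⊗|g¹⟩⟨g¹|),
S(A|E) ≥ h(N⁰/(N⁰+N¹)) − h(λ). -/
theorem cond_entropy_two_vector_bound {m : ℕ}
    (g0 g1 : EuclideanSpace ℂ (Fin m))
    (N0 N1 N : ℝ)
    (hN0 : N0 = ‖g0‖^2) (hN1 : N1 = ‖g1‖^2)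
    (hN0pos : 0 < N0) (hN1pos : 0 < N1) (hN : N = N0 + N1)
    (ρAE : Matrix (Fin 2 × Fin m) (Fin 2 × Fin m) ℂ)
    (hρAEdef : ∀ a i b j, ρAE (a, i) (b, j) =
      if a = 0 ∧ b = 0 then (N : ℂ)⁻¹ * (g0 i * starRingEnd ℂ (g0 j))
      else if a = 1 ∧ b = 1 then (N : ℂ)⁻¹ * (g1 i * starRingEnd ℂ (g1 j))
      else 0)
    (ρE : Matrix (Fin m) (Fin m) ℂ)
    (hρEdef : ∀ i j, ρE i j =
      (N : ℂ)⁻¹ * (g0 i * starRingEnd ℂ (g0 j) + g1 i * starRingEnd ℂ (g1 j)))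
    (hAE : ρAE.IsHermitian) (hE : ρE.IsHermitian) :
    vonNeumannEntropy hAE - vonNeumannEntropy hE ≥
      binEnt (N0 / (N0 + N1)) -
        binEnt (1/2 + Real.sqrt ((N0 - N1)^2 + 4 * (⟪g0, g1⟫.re)^2)
          / (2*(N0+N1))) := by
  have hNpos : 0 < N := by rw [hN]; linarith
  -- scalar inner product facts
  have hg00 : ∑ i, (starRingEnd ℂ) (g0 i) * g0 i = (N0:ℂ) := by
    have h1 : ⟪g0, g0⟫ = ((‖g0‖:ℂ))^2 := inner_self_eq_norm_sq_to_K g0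
    rw [PiLp.inner_apply] at h1
    simp only [RCLike.inner_apply'] at h1
    rw [h1, hN0]; push_cast; ring
  have hg11 : ∑ i, (starRingEnd ℂ) (g1 i) * g1 i = (N1:ℂ) := by
    have h1 : ⟪g1, g1⟫ = ((‖g1‖:ℂ))^2 := inner_self_eq_norm_sq_to_K g1
    rw [PiLp.inner_apply] at h1
    simp only [RCLike.inner_apply'] at h1
    rw [h1, hN1]; push_cast; ring
  have hg01 : ∑ i, (starRingEnd ℂ) (g0 i) * g1 i = ⟪g0, g1⟫ := by
    rw [PiLp.inner_apply]; simp only [RCLike.inner_apply']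
  have hg10 : ∑ i, (starRingEnd ℂ) (g1 i) * g0 i = (starRingEnd ℂ) ⟪g0, g1⟫ := by
    rw [show (starRingEnd ℂ) ⟪g0, g1⟫ = ⟪g1, g0⟫ from inner_conj_symm g1 g0, PiLp.inner_apply]
    simp only [RCLike.inner_apply']
  have hCS : Complex.normSq ⟪g0, g1⟫ ≤ N0 * N1 := by
    have h := norm_inner_le_norm (𝕜 := ℂ) g0 g1
    have h2 : Complex.normSq ⟪g0, g1⟫ = ‖⟪g0, g1⟫‖^2 := by
      rw [Complex.normSq_eq_norm_sq]
    rw [h2, hN0, hN1]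
    calc ‖⟪g0, g1⟫‖^2 ≤ (‖g0‖*‖g1‖)^2 := by
          apply pow_le_pow_left₀ (norm_nonneg _) h
      _ = ‖g0‖^2 * ‖g1‖^2 := by ring
  -- the E system
  set u0 : Fin m → ℂ := fun i => g0 i with hu0
  set u1 : Fin m → ℂ := fun i => g1 i with hu1
  have hx : star u0 ⬝ᵥ u0 = (N0:ℂ) := by
    simpa [dotProduct, hu0, Complex.star_def] using hg00
  have hy : star u1 ⬝ᵥ u1 = (N1:ℂ) := by
    simpa [dotProduct, hu1, Complex.star_def] using hg11
  have hxy : star u0 ⬝ᵥ u1 = ⟪g0, g1⟫ := by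
    simpa [dotProduct, hu0, hu1, Complex.star_def] using hg01
  have hyx : star u1 ⬝ᵥ u0 = (starRingEnd ℂ) ⟪g0, g1⟫ := by
    simpa [dotProduct, hu0, hu1, Complex.star_def] using hg10
  have hEeq : ρE = (N:ℂ)⁻¹ • (vecMulVec u0 (star u0) + vecMulVec u1 (star u1)) := by
    ext i j
    rw [hρEdef]
    simp [hu0, hu1, vecMulVec_apply, Complex.star_def, smul_eq_mul, mul_add]
  have hSE := entropy_two_vector u0 u1 N0 N1 N (Complex.normSq ⟪g0, g1⟫) ⟪g0, g1⟫
    hx hy hxy hyx rfl hN0pos hN1pos hN hCS hE hEeq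
  -- the AE system
  set v0 : Fin 2 × Fin m → ℂ := fun z => if z.1 = 0 then g0 z.2 else 0 with hv0
  set v1 : Fin 2 × Fin m → ℂ := fun z => if z.1 = 1 then g1 z.2 else 0 with hv1
  have hx' : star v0 ⬝ᵥ v0 = (N0:ℂ) := by
    simp only [dotProduct, Fintype.sum_prod_type, Fin.sum_univ_two, hv0, Pi.star_apply,
      Complex.star_def]
    simpa using hg00
  have hy' : star v1 ⬝ᵥ v1 = (N1:ℂ) := by
    simp only [dotProduct, Fintype.sum_prod_type, Fin.sum_univ_two, hv1, Pi.star_apply,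
      Complex.star_def]
    simpa using hg11
  have hxy' : star v0 ⬝ᵥ v1 = (0:ℂ) := by
    simp [dotProduct, Fintype.sum_prod_type, Fin.sum_univ_two, hv0, hv1, Complex.star_def]
  have hyx' : star v1 ⬝ᵥ v0 = (starRingEnd ℂ) (0:ℂ) := by
    simp [dotProduct, Fintype.sum_prod_type, Fin.sum_univ_two, hv0, hv1, Complex.star_def]
  have hAEeq : ρAE = (N:ℂ)⁻¹ • (vecMulVec v0 (star v0) + vecMulVec v1 (star v1)) := by
    ext ⟨a, i⟩ ⟨b, j⟩
    rw [hρAEdef]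
    fin_cases a <;> fin_cases b <;>
      simp [hv0, hv1, vecMulVec_apply, Complex.star_def, smul_eq_mul, mul_add]
  have hSAE := entropy_two_vector v0 v1 N0 N1 N 0 0
    hx' hy' hxy' hyx' (by simp) hN0pos hN1pos hN (by positivity) hAE hAEeq
  -- simplify the AE entropy
  have hbinAE : binEnt (1/2 + Real.sqrt ((N0 - N1)^2 + 4 * 0) / (2*N))
      = binEnt (N0 / (N0 + N1)) := by
    rw [show (N0 - N1)^2 + 4*(0:ℝ) = (N0-N1)^2 by ring, Real.sqrt_sq_eq_abs]
    rcases le_total N1 N0 with h | h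
    · rw [abs_of_nonneg (by linarith)]
      congr 1
      rw [hN]; field_simp; ring
    · rw [abs_of_nonpos (by linarith)]
      have e : 1/2 + -(N0 - N1)/(2*N) = 1 - N0/(N0+N1) := by
        rw [hN]; field_simp; ring
      rw [e, binEnt_one_sub]
  -- comparison of the two binary entropies
  have hccnn : (0:ℝ) ≤ Complex.normSq ⟪g0, g1⟫ := Complex.normSq_nonneg _
  have hain : (⟪g0, g1⟫.re)^2 ≤ Complex.normSq ⟪g0, g1⟫ := by
    rw [Complex.normSq_apply]
    nlinarith [sq_nonneg (⟪g0, g1⟫.im)]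
  have hsle : Real.sqrt ((N0 - N1)^2 + 4 * (⟪g0, g1⟫.re)^2)
      ≤ Real.sqrt ((N0 - N1)^2 + 4 * Complex.normSq ⟪g0, g1⟫) := by
    apply Real.sqrt_le_sqrt; linarith
  have hsleN : Real.sqrt ((N0 - N1)^2 + 4 * Complex.normSq ⟪g0, g1⟫) ≤ N := by
    rw [← Real.sqrt_sq hNpos.le]
    apply Real.sqrt_le_sqrt
    rw [hN]; nlinarith
  have hmono : binEnt (1/2 + Real.sqrt ((N0 - N1)^2 + 4 * Complex.normSq ⟪g0, g1⟫) / (2*N))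
      ≤ binEnt (1/2 + Real.sqrt ((N0 - N1)^2 + 4 * (⟪g0, g1⟫.re)^2) / (2*N)) := by
    apply binEnt_anti
    · have : 0 ≤ Real.sqrt ((N0 - N1)^2 + 4 * (⟪g0, g1⟫.re)^2) / (2*N) := by positivity
      linarith
    · have h2N : (0:ℝ) < 2*N := by linarith
      have hdd : Real.sqrt ((N0 - N1)^2 + 4 * (⟪g0, g1⟫.re)^2) / (2*N)
          ≤ Real.sqrt ((N0 - N1)^2 + 4 * Complex.normSq ⟪g0, g1⟫) / (2*N) := by
        first
          | exact div_le_div_of_nonneg_right hsle h2N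
          | exact (div_le_div_right h2N).mpr hsle
          | exact div_le_div_of_nonneg_right hsle h2N.le
      linarith
    · have : Real.sqrt ((N0 - N1)^2 + 4 * Complex.normSq ⟪g0, g1⟫) / (2*N) ≤ 1/2 := by
        rw [div_le_iff₀ (by linarith)]; linarith
      linarith
  rw [hSE, hSAE, hbinAE, hN]
  have := hmono
  rw [hN] at this
  linarith
end

section
/- In the depolarizing-channel setting with parameter Q and α ∈ (0,1), if additionally p_{a,ā} = Q, then Re⟨e₀|e₃⟩ = 1 − 2Q − Re⟨e₁|e₂⟩, independent of α; combined with the Cauchy–Schwarz bound |Re⟨e₁|e₂⟩| ≤ Q, this gives Re⟨e₀|e₃⟩ ∈ [1−3Q, 1−Q]. -/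
open scoped ComplexInnerProductSpace

/-- The embedding x ↦ |0⟩⊗x of the ancilla into qubit ⊗ ancilla (modeled as E × E
with the L² inner product, first component = |0⟩ slot, second = |1⟩ slot). -/
noncomputable def emb0 {E : Type*} [NormedAddCommGroup E] [InnerProductSpace ℂ E]
    (x : E) : WithLp 2 (E × E) := (WithLp.equiv 2 (E × E)).symm (x, 0)

/-- The embedding x ↦ |1⟩⊗x of the ancilla into qubit ⊗ ancilla. -/
noncomputable def emb1 {E : Type*} [NormedAddCommGroup E] [InnerProductSpace ℂ E]
    (x : E) : WithLp 2 (E × E) := (WithLp.equiv 2 (E × E)).symm (0, x)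

/-- in the depolarizing setting with parameter Q and α ∈ (0,1),
if p_{a,ā} = Q then Re⟨e₀|e₃⟩ = 1 − 2Q − Re⟨e₁|e₂⟩ (independent of α), and by
Cauchy–Schwarz Re⟨e₀|e₃⟩ ∈ [1−3Q, 1−Q]. -/
theorem depolarizing_re03_bound {E : Type*} [NormedAddCommGroup E]
    [InnerProductSpace ℂ E] [FiniteDimensional ℂ E]
    (e0 e1 e2 e3 f1 : E)
    (Q α αb : ℝ) (hα0 : 0 < α) (hα1 : α < 1) (hαb : αb = Real.sqrt (1 - α^2))
    (h00 : ⟪e0, e0⟫.re = 1 - Q) (h33 : ⟪e3, e3⟫.re = 1 - Q)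
    (h11 : ⟪e1, e1⟫.re = Q) (h22 : ⟪e2, e2⟫.re = Q)
    (h01 : ⟪e0, e1⟫.re = 0) (h02 : ⟪e0, e2⟫.re = 0)
    (h23 : ⟪e2, e3⟫.re = 0) (h13 : ⟪e1, e3⟫.re = 0)
    (hf1 : f1 = ((αb:ℂ)*(α:ℂ)) • e0 + (αb:ℂ)^2 • e2
        - (α:ℂ)^2 • e1 - ((α:ℂ)*(αb:ℂ)) • e3)
    (hpaa : ‖f1‖^2 = Q) :
    ⟪e0, e3⟫.re = 1 - 2*Q - ⟪e1, e2⟫.re ∧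
    1 - 3*Q ≤ ⟪e0, e3⟫.re ∧ ⟪e0, e3⟫.re ≤ 1 - Q := by
  have hαb2 : αb^2 = 1 - α^2 := by
    rw [hαb, Real.sq_sqrt]; nlinarith
  have hαbpos : 0 < αb := by
    rw [hαb]; apply Real.sqrt_pos.2; nlinarith
  have hni : ∀ x : E, (⟪x, x⟫ : ℂ).re = ‖x‖^2 := by
    intro x
    rw [inner_self_eq_norm_sq_to_K]; norm_cast
  have him : ∀ x : E, (⟪x, x⟫ : ℂ).im = 0 := by
    intro x
    rw [inner_self_eq_norm_sq_to_K]; norm_cast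
  have hsymm : ∀ x y : E, (⟪y, x⟫ : ℂ).re = ⟪x, y⟫.re := by
    intro x y
    rw [← inner_conj_symm x y, Complex.conj_re]
  -- expand the norm of f1
  have hexp : (⟪f1, f1⟫ : ℂ).re =
      (αb*α)^2 * ((1-Q) + (1-Q)) + (αb^2)^2 * Q + (α^2)^2 * Q
        - 2*(αb*α)^2 * ⟪e0, e3⟫.re - 2*(αb^2)*(α^2) * ⟪e1, e2⟫.re := by
    rw [hf1]
    simp only [inner_sub_left, inner_sub_right, inner_add_left, inner_add_right,
      inner_smul_left, inner_smul_right, map_mul, map_pow, Complex.conj_ofReal,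
      ← Complex.ofReal_pow, ← Complex.ofReal_mul,
      Complex.sub_re, Complex.add_re, Complex.mul_re, Complex.ofReal_re,
      Complex.ofReal_im, Complex.mul_im, him, zero_mul, mul_zero, sub_zero,
      add_zero, zero_add, zero_sub, neg_zero]
    rw [hsymm e0 e2, hsymm e0 e1, hsymm e0 e3, hsymm e1 e2, hsymm e1 e3, hsymm e2 e3]
    rw [h00, h33, h11, h22, h01, h02, h23, h13]
    ring
  have hnorm : (αb*α)^2 * ((1-Q) + (1-Q)) + (αb^2)^2 * Q + (α^2)^2 * Q
        - 2*(αb*α)^2 * ⟪e0, e3⟫.re - 2*(αb^2)*(α^2) * ⟪e1, e2⟫.re = Q := by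
    rw [← hexp, hni, hpaa]
  have ht : 0 < αb^2 * α^2 := by positivity
  have h2 : αb^2 * α^2 * (1 - 2*Q - ⟪e1, e2⟫.re - ⟪e0, e3⟫.re) = 0 := by
    linear_combination (1/2)*hnorm - (Q/2)*(αb^2+α^2+1)*hαb2
  have key : ⟪e0, e3⟫.re = 1 - 2*Q - ⟪e1, e2⟫.re := by
    rcases mul_eq_zero.mp h2 with h | h
    · exact absurd h (ne_of_gt ht)
    · linarith
  -- Cauchy–Schwarz
  have hQ0 : 0 ≤ Q := by rw [← h11, hni]; positivity
  have hcs : |(⟪e1, e2⟫ : ℂ).re| ≤ Q := by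
    have h1 : ‖e1‖ = Real.sqrt Q := by
      rw [← h11, hni, Real.sqrt_sq (norm_nonneg _)]
    have h2 : ‖e2‖ = Real.sqrt Q := by
      rw [← h22, hni, Real.sqrt_sq (norm_nonneg _)]
    calc |(⟪e1, e2⟫ : ℂ).re| ≤ ‖(⟪e1, e2⟫ : ℂ)‖ := Complex.abs_re_le_norm _
      _ ≤ ‖e1‖ * ‖e2‖ := norm_inner_le_norm _ _
      _ = Q := by rw [h1, h2, ← Real.sqrt_mul hQ0, Real.sqrt_mul_self hQ0]
  have hb := abs_le.mp hcs
  exact ⟨key, by rw [key]; linarith [hb.2], by rw [key]; linarith [hb.1]⟩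
end
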